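/- Let A=(S,R) be an argumentation network (S possibly infinite) and let M be a two-world constant-domain predicate G3 model with domain S in which R is interpreted by the attack relation of A, such that t forces each of (A1),(A2),(B1),(B2). Define λ_M(x)=in if x∈ι_t, λ_M(x)=out if x∉ι_s, λ_M(x)=und if x∈ι_s∖ι_t, where ι_t ⊆ ι_s are the extensions of the predicate In at t and s. Then λ_M is a complete extension of A. -/
import Mathlib


/-- The three Caminada labels. -/
inductive Label where
  | in_ : Label
  | out : Label
  | und : Label
deriving DecidableEq

/-- Caminada labelling / complete extension of the network `(S, R)`. -/
def IsCompleteExt {S : Type} (R : S → S → Prop) (l : S → Label) : Prop :=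
  (∀ x, l x = .in_ ↔ ∀ y, R y x → l y = .out) ∧
  (∀ x, l x = .out ↔ ∃ y, R y x ∧ l y = .in_) ∧
  (∀ x, l x = .und ↔ ((∀ y, R y x → l y ≠ .in_) ∧ ∃ y, R y x ∧ l y = .und))

/- Two-world constant-domain predicate G3 model: worlds are `Bool` with
`false = t < true = s`; `R` is interpreted world-independently; the unary
predicate `In` is interpreted by `iota w`, with `iota false ⊆ iota true`
(persistence).  Below, the intuitionistic forcing of each axiom is unfolded:
`∀` and `→` and `¬` quantify over all worlds `≥` the current one, `n` holds
exactly at world `s = true`. -/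

/-- `w ⊨ (A1)`, i.e. `∀x[In(x) → (n ∨ ∀y(yRx → ¬In(y)))]` at world `w`. -/
def fA1 {S : Type} (R : S → S → Prop) (iota : Bool → S → Prop) (w : Bool) : Prop :=
  ∀ b, w ≤ b → ∀ x : S, ∀ c, b ≤ c → iota c x →
    (c = true ∨ ∀ e, c ≤ e → ∀ y : S, ∀ f, e ≤ f → R y x → ∀ g, f ≤ g → ¬ iota g y)

/-- `w ⊨ (A2)`, i.e. `∀x[∀y(yRx → ¬In(y)) → (n ∨ In(x))]` at world `w`. -/
def fA2 {S : Type} (R : S → S → Prop) (iota : Bool → S → Prop) (w : Bool) : Prop :=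
  ∀ b, w ≤ b → ∀ x : S, ∀ c, b ≤ c →
    (∀ e, c ≤ e → ∀ y : S, ∀ f, e ≤ f → R y x → ∀ g, f ≤ g → ¬ iota g y) →
    (c = true ∨ iota c x)

/-- `w ⊨ (B1)`, i.e. `∀x[¬In(x) → (n ∨ ∃y(yRx ∧ In(y)))]` at world `w`. -/
def fB1 {S : Type} (R : S → S → Prop) (iota : Bool → S → Prop) (w : Bool) : Prop :=
  ∀ b, w ≤ b → ∀ x : S, ∀ c, b ≤ c → (∀ d, c ≤ d → ¬ iota d x) →
    (c = true ∨ ∃ y : S, R y x ∧ iota c y)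

/-- `w ⊨ (B2)`, i.e. `∀x[∃y(yRx ∧ In(y)) → (n ∨ ¬In(x))]` at world `w`. -/
def fB2 {S : Type} (R : S → S → Prop) (iota : Bool → S → Prop) (w : Bool) : Prop :=
  ∀ b, w ≤ b → ∀ x : S, ∀ c, b ≤ c → (∃ y : S, R y x ∧ iota c y) →
    (c = true ∨ ∀ d, c ≤ d → ¬ iota d x)

/-- The labelling `λ_M` of the model: `in` if `x ∈ ι_t`, `out` if `x ∉ ι_s`,
`und` if `x ∈ ι_s ∖ ι_t`. -/
noncomputable def lamM {S : Type} (iota : Bool → S → Prop) (x : S) : Label :=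
  open Classical in
  if iota false x then .in_ else if iota true x then .und else .out

/-- If the two-world constant-domain predicate G3 model with domain `S`,
attack relation `R` and persistent interpretation `iota` of `In` forces each of
(A1),(A2),(B1),(B2) at `t`, then `λ_M` is a complete extension of `(S,R)`. -/
theorem stmt10 {S : Type} [Nonempty S] (R : S → S → Prop) (iota : Bool → S → Prop)
    (hpers : ∀ x, iota false x → iota true x)
    (h1 : fA1 R iota false) (h2 : fA2 R iota false)
    (h3 : fB1 R iota false) (h4 : fB2 R iota false) :
    IsCompleteExt R (lamM iota) := by

  classical
  have hup : ∀ (g : Bool) y, iota g y → iota true y := by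
    intro g y hy; cases g
    · exact hpers y hy
    · exact hy
  have hin : ∀ x, lamM iota x = .in_ ↔ iota false x := by
    intro x; unfold lamM; split_ifs with h h' <;> simp_all
  have hout : ∀ x, lamM iota x = .out ↔ ¬ iota true x := by
    intro x; unfold lamM; split_ifs with h h' <;> simp_all
  have hund : ∀ x, lamM iota x = .und ↔ (iota true x ∧ ¬ iota false x) := by
    intro x; unfold lamM; split_ifs with h h' <;> simp_all
  -- no attacker of an element of iota true is in iota false
  have hnotin : ∀ x, iota true x → ∀ y, R y x → ¬ iota false y := by
    intro x hsx y hyx hiy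
    rcases h4 false le_rfl x false le_rfl ⟨y, hyx, hiy⟩ with h | h
    · simp at h
    · exact h true (by simp) hsx
  refine ⟨?_, ?_, ?_⟩
  · intro x
    rw [hin]
    constructor
    · intro hx y hyx
      rw [hout]
      rcases h1 false le_rfl x false le_rfl hx with h | h
      · simp at h
      · exact h false le_rfl y false le_rfl hyx true (by simp)
    · intro hall
      have hhyp : ∀ e, false ≤ e → ∀ y, ∀ f, e ≤ f → R y x → ∀ g, f ≤ g → ¬ iota g y := by
        intro e he y f hf hyx g hg hiy
        exact (hout y).mp (hall y hyx) (hup g y hiy)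
      rcases h2 false le_rfl x false le_rfl hhyp with h | h
      · simp at h
      · exact h
  · intro x
    rw [hout]
    constructor
    · intro hx
      rcases h3 false le_rfl x false le_rfl (fun d _ hd => hx (hup d x hd)) with h | h
      · simp at h
      · obtain ⟨y, hyx, hiy⟩ := h
        exact ⟨y, hyx, (hin y).mpr hiy⟩
    · rintro ⟨y, hyx, hy⟩ hsx
      exact hnotin x hsx y hyx ((hin y).mp hy)
  · intro x
    rw [hund]
    constructor
    · rintro ⟨hsx, htx⟩
      constructor
      · intro y hyx hy
        exact hnotin x hsx y hyx ((hin y).mp hy)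
      · by_contra hno
        push_neg at hno
        have hallout : ∀ y, R y x → ¬ iota true y := by
          intro y hyx hty
          exact hno y hyx ((hund y).mpr ⟨hty, hnotin x hsx y hyx⟩)
        have hhyp : ∀ e, false ≤ e → ∀ y, ∀ f, e ≤ f → R y x → ∀ g, f ≤ g → ¬ iota g y := by
          intro e he y f hf hyx g hg hiy
          exact hallout y hyx (hup g y hiy)
        rcases h2 false le_rfl x false le_rfl hhyp with h | h
        · simp at h
        · exact htx h
    · rintro ⟨hall, y0, hy0, hundy0⟩
      obtain ⟨hsy0, hty0⟩ := (hund y0).mp hundy0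
      have htx : ¬ iota false x := by
        intro hx
        rcases h1 false le_rfl x false le_rfl hx with h | h
        · simp at h
        · exact h false le_rfl y0 false le_rfl hy0 true (by simp) hsy0
      refine ⟨?_, htx⟩
      by_contra hsx
      rcases h3 false le_rfl x false le_rfl (fun d _ hd => hsx (hup d x hd)) with h | h
      · simp at h
      · obtain ⟨y, hyx, hiy⟩ := h
        exact hall y hyx ((hin y).mpr hiy)
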